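/- arXiv:1401.0085 — 4 statements merged into one kernel-verified Lean document; each statement's English description precedes it below -/
import Mathlib

section
/- Let 0 ≤ p ≤ 1/4 and n a positive integer with p·n ≥ 36. Let X be a binomial random variable with parameters n and p. Then for any real number θ, the probability that |X − θ| ≥ (1/2)·√(p·n) is at least 0.01. -/
open Finset

/-- The probability mass function of the binomial distribution B(n,p). -/
noncomputable def binomPMF (p : ℝ) (n k : ℕ) : ℝ :=
  (n.choose k : ℝ) * p ^ k * (1 - p) ^ (n - k)

lemma sum_binomPMF (p : ℝ) (n : ℕ) :
    ∑ k ∈ Finset.range (n + 1), binomPMF p n k = 1 := by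
  have h := add_pow p (1 - p) n
  have h1 : p + (1 - p) = 1 := by ring
  rw [h1, one_pow] at h
  rw [show ∑ k ∈ Finset.range (n + 1), binomPMF p n k
      = ∑ k ∈ Finset.range (n + 1), p ^ k * (1 - p) ^ (n - k) * (n.choose k : ℝ) from
    Finset.sum_congr rfl fun k _ => by unfold binomPMF; ring]
  exact h.symm

lemma cast_choose_one (k : ℕ) : (k.choose 1 : ℝ) = k := by
  rw [Nat.choose_one_right]

lemma cast_choose_two (k : ℕ) : (k.choose 2 : ℝ) * 2 = k * (k - 1) := by
  induction k with
  | zero => simp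
  | succ k ih =>
    push_cast [Nat.choose_succ_succ, Nat.choose_one_right]
    push_cast at ih
    linear_combination ih

lemma cast_choose_three (k : ℕ) : (k.choose 3 : ℝ) * 6 = k * (k - 1) * (k - 2) := by
  induction k with
  | zero => simp
  | succ k ih =>
    have h2 := cast_choose_two k
    push_cast [Nat.choose_succ_succ]
    push_cast at ih h2
    linear_combination ih + 3 * h2

lemma cast_choose_four (k : ℕ) : (k.choose 4 : ℝ) * 24 = k * (k - 1) * (k - 2) * (k - 3) := by
  induction k with
  | zero => simp
  | succ k ih =>
    have h3 := cast_choose_three k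
    push_cast [Nat.choose_succ_succ]
    push_cast at ih h3
    linear_combination ih + 4 * h3

lemma sum_choose_binomPMF (p : ℝ) {n j : ℕ} (hj : j ≤ n) :
    ∑ k ∈ Finset.range (n + 1), (k.choose j : ℝ) * binomPMF p n k
      = (n.choose j : ℝ) * p ^ j := by
  have h1 : ∑ k ∈ Finset.range (n + 1), (k.choose j : ℝ) * binomPMF p n k
      = ∑ k ∈ Finset.Ico j (n + 1), (k.choose j : ℝ) * binomPMF p n k := by
    refine (Finset.sum_subset ?_ ?_).symm
    · intro x hx
      simp only [Finset.mem_Ico, Finset.mem_range] at hx ⊢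
      omega
    · intro x hx hx'
      simp only [Finset.mem_range] at hx
      simp only [Finset.mem_Ico] at hx'
      have : x < j := by omega
      simp [Nat.choose_eq_zero_of_lt this]
  rw [h1, Finset.sum_Ico_eq_sum_range]
  have h2 : ∀ m ∈ Finset.range (n + 1 - j),
      ((j + m).choose j : ℝ) * binomPMF p n (j + m)
        = ((n.choose j : ℝ) * p ^ j) * binomPMF p (n - j) m := by
    intro m hm
    simp only [Finset.mem_range] at hm
    have hmn : j + m ≤ n := by omega
    have hc : n.choose (j + m) * (j + m).choose j = n.choose j * (n - j).choose m := by
      have h := Nat.choose_mul (n := n) (Nat.le_add_right j m)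
      simpa using h
    have hcR : ((n.choose (j + m) : ℝ)) * ((j + m).choose j : ℝ)
        = (n.choose j : ℝ) * ((n - j).choose m : ℝ) := by exact_mod_cast hc
    have hsub : n - (j + m) = (n - j) - m := by omega
    unfold binomPMF
    rw [hsub, pow_add]
    linear_combination (p ^ j * p ^ m * (1 - p) ^ ((n - j) - m)) * hcR
  rw [Finset.sum_congr rfl h2, ← Finset.mul_sum]
  rw [show n + 1 - j = (n - j) + 1 by omega, sum_binomPMF, mul_one]

lemma key_ineq (σ2 d r2 m3 m4 : ℝ) (h27 : 27 ≤ σ2) (hr0 : 0 ≤ r2) (hr : r2 ≤ σ2 / 3)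
    (hm3u : m3 ≤ σ2) (hm3l : -σ2 ≤ m3) (hm4 : m4 ≤ σ2 + 3 * σ2 ^ 2) :
    0.01 * (m4 + 4 * d * m3 + 6 * d ^ 2 * σ2 + d ^ 4) ≤ (σ2 + d ^ 2 - r2) ^ 2 := by
  have hσ0 : (0:ℝ) ≤ σ2 := by linarith
  have hstep : (2 * σ2 / 3 + d ^ 2) ^ 2 ≤ (σ2 + d ^ 2 - r2) ^ 2 := by
    have h1 : 2 * σ2 / 3 + d ^ 2 ≤ σ2 + d ^ 2 - r2 := by linarith
    have h0 : (0:ℝ) ≤ 2 * σ2 / 3 + d ^ 2 := by positivity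
    nlinarith
  nlinarith [mul_nonneg (sq_nonneg (d - 1)) (by linarith : (0:ℝ) ≤ σ2 + m3),
    mul_nonneg (sq_nonneg (d + 1)) (by linarith : (0:ℝ) ≤ σ2 - m3),
    mul_le_mul_of_nonneg_left h27 hσ0, sq_nonneg d,
    mul_nonneg hσ0 (sq_nonneg d)]

lemma scalar_facts (p N : ℝ) (hp0 : 0 ≤ p) (hp : p ≤ 1 / 4) (hN0 : 0 < N)
    (hpN : 36 ≤ p * N) :
    27 ≤ N * p * (1 - p) ∧ p * N / 4 ≤ N * p * (1 - p) / 3 ∧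
    N * p * (1 - p) * (1 - 2 * p) ≤ N * p * (1 - p) ∧
    -(N * p * (1 - p)) ≤ N * p * (1 - p) * (1 - 2 * p) ∧
    N * p * (1 - p) * (1 + 3 * (N - 2) * p * (1 - p))
      ≤ N * p * (1 - p) + 3 * (N * p * (1 - p)) ^ 2 := by
  have hq0 : (0:ℝ) ≤ 1 - p := by linarith
  have hσ0 : (0:ℝ) ≤ N * p * (1 - p) := by positivity
  refine ⟨?_, ?_, ?_, ?_, ?_⟩
  · nlinarith [mul_le_mul hpN (show (3:ℝ)/4 ≤ 1 - p by linarith) (by norm_num)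
      (by linarith : (0:ℝ) ≤ p * N)]
  · nlinarith [mul_nonneg (mul_nonneg hN0.le hp0) (by linarith : (0:ℝ) ≤ 1/4 - p)]
  · nlinarith [mul_nonneg hσ0 hp0]
  · nlinarith [mul_nonneg hσ0 hq0]
  · nlinarith [mul_nonneg hN0.le (sq_nonneg (p * (1 - p)))]

/-- Anti-concentration for the binomial: if `0 ≤ p ≤ 1/4` and `p·n ≥ 36`, then for any
center `θ`, the probability that `|X - θ| ≥ (1/2)·√(p·n)` is at least `0.01`. -/
theorem binomial_anticoncentration (p : ℝ) (n : ℕ) (hp0 : 0 ≤ p) (hp : p ≤ 1 / 4)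
    (hn : 0 < n) (hpn : 36 ≤ p * n) (θ : ℝ) :
    0.01 ≤ ∑ k ∈ Finset.range (n + 1),
      if (1 / 2) * Real.sqrt (p * n) ≤ |(k : ℝ) - θ| then binomPMF p n k else 0 := by
  have hq0 : (0:ℝ) ≤ 1 - p := by linarith
  have hPnn0 : ∀ k, 0 ≤ binomPMF p n k := fun k =>
    mul_nonneg (mul_nonneg (Nat.cast_nonneg _) (pow_nonneg hp0 _)) (pow_nonneg hq0 _)
  set N : ℝ := (n : ℝ) with hNdef
  have hN0 : 0 < N := by rw [hNdef]; exact_mod_cast hn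
  have hpN : 36 ≤ p * N := hpn
  have hN144 : 144 ≤ N := by nlinarith
  have hn4 : 4 ≤ n := by
    have h4 : (4:ℝ) ≤ (n:ℝ) := by rw [← hNdef]; linarith
    exact_mod_cast h4
  have hF1' := sum_choose_binomPMF p (show 1 ≤ n by omega)
  have hF2' := sum_choose_binomPMF p (show 2 ≤ n by omega)
  have hF3' := sum_choose_binomPMF p (show 3 ≤ n by omega)
  have hF4' := sum_choose_binomPMF p (show 4 ≤ n by omega)
  set P : ℕ → ℝ := fun k => binomPMF p n k with hPdef
  have hPnn : ∀ k, 0 ≤ P k := hPnn0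
  have hF0 : ∑ k ∈ Finset.range (n + 1), P k = 1 := sum_binomPMF p n
  have hF1 : ∑ k ∈ Finset.range (n + 1), (k.choose 1 : ℝ) * P k = (n.choose 1 : ℝ) * p ^ 1 := hF1'
  have hF2 : ∑ k ∈ Finset.range (n + 1), (k.choose 2 : ℝ) * P k = (n.choose 2 : ℝ) * p ^ 2 := hF2'
  have hF3 : ∑ k ∈ Finset.range (n + 1), (k.choose 3 : ℝ) * P k = (n.choose 3 : ℝ) * p ^ 3 := hF3'
  have hF4 : ∑ k ∈ Finset.range (n + 1), (k.choose 4 : ℝ) * P k = (n.choose 4 : ℝ) * p ^ 4 := hF4'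
  set r2 : ℝ := p * N / 4 with hr2def
  have hr2nn : 0 ≤ r2 := by rw [hr2def]; positivity
  have hsq : ((1 / 2) * Real.sqrt (p * N)) ^ 2 = r2 := by
    rw [mul_pow, Real.sq_sqrt (by linarith : (0:ℝ) ≤ p * N), hr2def]
    ring
  set A : ℝ := ∑ k ∈ Finset.range (n + 1), P k * ((k : ℝ) - θ) ^ 2 with hAdef
  set B : ℝ := ∑ k ∈ Finset.range (n + 1), P k * ((k : ℝ) - θ) ^ 4 with hBdef
  set K : ℝ := ∑ k ∈ Finset.range (n + 1),
      if (1 / 2) * Real.sqrt (p * N) ≤ |(k : ℝ) - θ| then P k * ((k : ℝ) - θ) ^ 2 else 0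
    with hKdef
  set S : ℝ := ∑ k ∈ Finset.range (n + 1),
      if (1 / 2) * Real.sqrt (p * N) ≤ |(k : ℝ) - θ| then P k else 0 with hSdef
  clear_value N P r2 A B K S
  clear hF1' hF2' hF3' hF4' hPnn0
  -- moment computations
  have hA : A = N * p * (1 - p) + (N * p - θ) ^ 2 := by
    have e1 : ∑ k ∈ Finset.range (n + 1), P k * ((k : ℝ) - θ) ^ 2
        = ∑ k ∈ Finset.range (n + 1),
        (2 * ((k.choose 2 : ℝ) * P k) + (1 - 2 * θ) * ((k.choose 1 : ℝ) * P k)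
          + θ ^ 2 * P k) := by
      refine Finset.sum_congr rfl fun k _ => ?_
      have h2 := cast_choose_two k
      have h1 := cast_choose_one k
      linear_combination (-(P k)) * h2 + (-((1 - 2 * θ) * P k)) * h1
    rw [hAdef, e1, Finset.sum_add_distrib, Finset.sum_add_distrib,
      ← Finset.mul_sum, ← Finset.mul_sum, ← Finset.mul_sum, hF0, hF1, hF2]
    have hc2 := cast_choose_two n
    rw [Nat.choose_one_right]
    push_cast
    rw [← hNdef] at hc2 ⊢
    linear_combination (p ^ 2) * hc2
  have hB : B = N * p * (1 - p) * (1 + 3 * (N - 2) * p * (1 - p))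
      + 4 * (N * p - θ) * (N * p * (1 - p) * (1 - 2 * p))
      + 6 * (N * p - θ) ^ 2 * (N * p * (1 - p)) + (N * p - θ) ^ 4 := by
    have e1 : ∑ k ∈ Finset.range (n + 1), P k * ((k : ℝ) - θ) ^ 4
        = ∑ k ∈ Finset.range (n + 1),
        (24 * ((k.choose 4 : ℝ) * P k) + (36 - 24 * θ) * ((k.choose 3 : ℝ) * P k)
          + (14 - 24 * θ + 12 * θ ^ 2) * ((k.choose 2 : ℝ) * P k)
          + (1 - 4 * θ + 6 * θ ^ 2 - 4 * θ ^ 3) * ((k.choose 1 : ℝ) * P k)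
          + θ ^ 4 * P k) := by
      refine Finset.sum_congr rfl fun k _ => ?_
      have h4 := cast_choose_four k
      have h3 := cast_choose_three k
      have h2 := cast_choose_two k
      have h1 := cast_choose_one k
      linear_combination (-(P k)) * h4 + (-((6 - 4 * θ) * P k)) * h3
        + (-((7 - 12 * θ + 6 * θ ^ 2) * P k)) * h2
        + (-((1 - 4 * θ + 6 * θ ^ 2 - 4 * θ ^ 3) * P k)) * h1
    rw [hBdef, e1]
    simp only [Finset.sum_add_distrib, ← Finset.mul_sum]
    rw [hF0, hF1, hF2, hF3, hF4]
    have hc2 := cast_choose_two n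
    have hc3 := cast_choose_three n
    have hc4 := cast_choose_four n
    rw [Nat.choose_one_right]
    push_cast
    rw [← hNdef] at hc2 hc3 hc4 ⊢
    linear_combination (p ^ 4) * hc4 + ((6 - 4 * θ) * p ^ 3) * hc3
      + ((7 - 12 * θ + 6 * θ ^ 2) * p ^ 2) * hc2
  -- Cauchy-Schwarz
  have hCS : K ^ 2 ≤ S * B := by
    have h := Finset.sum_mul_sq_le_sq_mul_sq (Finset.range (n + 1))
      (fun k => if (1 / 2) * Real.sqrt (p * N) ≤ |(k : ℝ) - θ| then Real.sqrt (P k) else 0)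
      (fun k => Real.sqrt (P k) * ((k : ℝ) - θ) ^ 2)
    have e1 : ∑ k ∈ Finset.range (n + 1),
        (if (1 / 2) * Real.sqrt (p * N) ≤ |(k : ℝ) - θ| then Real.sqrt (P k) else 0)
          * (Real.sqrt (P k) * ((k : ℝ) - θ) ^ 2)
        = ∑ k ∈ Finset.range (n + 1),
          (if (1 / 2) * Real.sqrt (p * N) ≤ |(k : ℝ) - θ| then P k * ((k : ℝ) - θ) ^ 2
            else 0) := by
      refine Finset.sum_congr rfl fun k _ => ?_
      split_ifs with hc
      · rw [← mul_assoc, Real.mul_self_sqrt (hPnn k)]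
      · simp
    have e2 : ∑ k ∈ Finset.range (n + 1),
        (if (1 / 2) * Real.sqrt (p * N) ≤ |(k : ℝ) - θ| then Real.sqrt (P k) else 0) ^ 2
        = ∑ k ∈ Finset.range (n + 1),
          (if (1 / 2) * Real.sqrt (p * N) ≤ |(k : ℝ) - θ| then P k else 0) := by
      refine Finset.sum_congr rfl fun k _ => ?_
      split_ifs with hc
      · exact Real.sq_sqrt (hPnn k)
      · simp
    have e3 : ∑ k ∈ Finset.range (n + 1),
        (Real.sqrt (P k) * ((k : ℝ) - θ) ^ 2) ^ 2
        = ∑ k ∈ Finset.range (n + 1), P k * ((k : ℝ) - θ) ^ 4 := by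
      refine Finset.sum_congr rfl fun k _ => ?_
      rw [mul_pow, Real.sq_sqrt (hPnn k), ← pow_mul]
    rw [e1, e2, e3, ← hKdef, ← hSdef, ← hBdef] at h
    exact h
  -- K lower bound
  have hK : A - r2 ≤ K := by
    have h1 : A - K = ∑ k ∈ Finset.range (n + 1),
        (if (1 / 2) * Real.sqrt (p * N) ≤ |(k : ℝ) - θ| then 0
          else P k * ((k : ℝ) - θ) ^ 2) := by
      rw [hAdef, hKdef, ← Finset.sum_sub_distrib]
      exact Finset.sum_congr rfl fun k _ => by split_ifs <;> ring
    have h2 : ∑ k ∈ Finset.range (n + 1),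
        (if (1 / 2) * Real.sqrt (p * N) ≤ |(k : ℝ) - θ| then 0
          else P k * ((k : ℝ) - θ) ^ 2)
        ≤ ∑ k ∈ Finset.range (n + 1), P k * r2 := by
      refine Finset.sum_le_sum fun k _ => ?_
      split_ifs with hc
      · exact mul_nonneg (hPnn k) hr2nn
      · have hlt : |(k : ℝ) - θ| < (1 / 2) * Real.sqrt (p * N) := not_le.1 hc
        have hx : ((k : ℝ) - θ) ^ 2 ≤ r2 := by
          rw [← hsq, ← sq_abs]
          exact pow_le_pow_left₀ (abs_nonneg _) hlt.le 2
        exact mul_le_mul_of_nonneg_left hx (hPnn k)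
    have h3 : ∑ k ∈ Finset.range (n + 1), P k * r2 = r2 := by
      rw [← Finset.sum_mul, hF0, one_mul]
    linarith
  have hS1 : S ≤ 1 := by
    have h : (∑ k ∈ Finset.range (n + 1),
        if (1 / 2) * Real.sqrt (p * N) ≤ |(k : ℝ) - θ| then P k else 0)
        ≤ ∑ k ∈ Finset.range (n + 1), P k := by
      refine Finset.sum_le_sum fun k _ => ?_
      split_ifs
      · exact le_rfl
      · exact hPnn k
    rw [hSdef]
    exact h.trans (le_of_eq hF0)
  have hBnn : 0 ≤ B := by
    rw [hBdef]
    exact Finset.sum_nonneg fun k _ => mul_nonneg (hPnn k) (by positivity)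
  clear hPnn hF0 hF1 hF2 hF3 hF4 hPdef hAdef hBdef hKdef hSdef hsq P
  -- scalar bounds
  obtain ⟨hσ27, hrσ', hm3u, hm3l, hm4⟩ := scalar_facts p N hp0 hp hN0 hpN
  have hrσ : r2 ≤ N * p * (1 - p) / 3 := by rw [hr2def]; exact hrσ'
  have hkey : 0.01 * B ≤ (A - r2) ^ 2 := by
    rw [hA, hB]
    exact key_ineq (N * p * (1 - p)) (N * p - θ) r2
      (N * p * (1 - p) * (1 - 2 * p)) (N * p * (1 - p) * (1 + 3 * (N - 2) * p * (1 - p)))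
      hσ27 hr2nn hrσ hm3u hm3l hm4
  have hAr : 18 ≤ A - r2 := by
    rw [hA]
    have := sq_nonneg (N * p - θ)
    linarith
  have hKsq : (A - r2) ^ 2 ≤ K ^ 2 := by
    have h0 : (0:ℝ) ≤ A - r2 := by linarith
    exact pow_le_pow_left₀ h0 hK 2
  have hSB : S * B ≤ B := mul_le_of_le_one_left hBnn hS1
  have h324 : 324 ≤ (A - r2) ^ 2 := by nlinarith [hAr]
  have hBpos : 0 < B := by linarith
  have hfin : 0.01 * B ≤ S * B := by linarith
  exact le_of_mul_le_mul_right (by linarith) hBpos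
end

section
/- Let X be a binomial random variable with parameters n and p where 0 ≤ p ≤ 1/4 and p·n ≥ 36. Then the contribution to the variance from the tail satisfies E[(X − pn)² · 1{|X − pn| ≥ 6√(pn)}] ≤ 0.01·p·n, and consequently E[(X − pn)² · 1{|X − pn| < 6√(pn)}] ≥ 0.74·p·n. -/
open Finset

lemma cast_desc_prod (a : ℕ) : ∀ k : ℕ,
    ((a.descFactorial k : ℕ) : ℝ) = ∏ j ∈ Finset.range k, ((a : ℝ) - j)
  | 0 => by simp
  | (k+1) => by
    rw [Nat.descFactorial_succ, Finset.prod_range_succ, ← cast_desc_prod a k]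
    rcases le_or_gt k a with h | h
    · rw [Nat.cast_mul, Nat.cast_sub h]; ring
    · rw [Nat.descFactorial_eq_zero_iff_lt.2 h]; simp

lemma desc_moment (p : ℝ) (n k : ℕ) :
    ∑ i ∈ Finset.range (n+1), (i.descFactorial k : ℝ) * binomPMF p n i
      = (n.descFactorial k : ℝ) * p ^ k := by
  rcases lt_or_ge n k with h | h
  · rw [Nat.descFactorial_eq_zero_iff_lt.2 h, Finset.sum_eq_zero]
    · simp
    · intro i hi
      have hik : i < k := lt_of_lt_of_le (Finset.mem_range.1 hi) (by omega)
      rw [Nat.descFactorial_eq_zero_iff_lt.2 hik]; simp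
  · have hsplit : ∑ i ∈ Finset.range (n+1), (i.descFactorial k : ℝ) * binomPMF p n i
        = ∑ i ∈ Finset.Ico k (n+1), (i.descFactorial k : ℝ) * binomPMF p n i := by
      rw [Finset.range_eq_Ico, ← Finset.sum_Ico_consecutive _ (Nat.zero_le k) (by omega : k ≤ n+1)]
      have hz : ∑ i ∈ Finset.Ico 0 k, (i.descFactorial k : ℝ) * binomPMF p n i = 0 := by
        apply Finset.sum_eq_zero
        intro i hi
        rw [Nat.descFactorial_eq_zero_iff_lt.2 (Finset.mem_Ico.1 hi).2]; simp
      rw [hz, zero_add]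
    rw [hsplit, Finset.sum_Ico_eq_sum_range]
    have hterm : ∀ j ∈ Finset.range (n+1-k),
        ((k+j).descFactorial k : ℝ) * binomPMF p n (k+j)
        = (n.descFactorial k : ℝ) * p^k * (((n-k).choose j : ℝ) * p^j * (1-p)^((n-k)-j)) := by
      intro j hj
      have hj' : j < n+1-k := Finset.mem_range.1 hj
      have hkjn : k + j ≤ n := by omega
      have hnat : (k+j).descFactorial k * n.choose (k+j) = n.descFactorial k * (n-k).choose j := by
        have hcm := Nat.choose_mul (n := n) (Nat.le_add_right k j)
        rw [Nat.add_sub_cancel_left] at hcm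
        rw [Nat.descFactorial_eq_factorial_mul_choose, Nat.descFactorial_eq_factorial_mul_choose,
          mul_assoc, mul_assoc, mul_comm ((k+j).choose k), hcm]
      have hcast : ((k+j).descFactorial k : ℝ) * (n.choose (k+j) : ℝ)
          = (n.descFactorial k : ℝ) * ((n-k).choose j : ℝ) := by exact_mod_cast hnat
      have hexp : n - (k+j) = (n-k) - j := by omega
      unfold binomPMF
      rw [hexp, pow_add]
      linear_combination (p^k * p^j * (1-p)^((n-k)-j)) * hcast
    rw [Finset.sum_congr rfl hterm, ← Finset.mul_sum]
    have hnk : n+1-k = (n-k)+1 := by omega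
    rw [hnk]
    have hbin : ∑ j ∈ Finset.range ((n-k)+1), ((n-k).choose j : ℝ) * p^j * (1-p)^((n-k)-j) = 1 := by
      have hap := add_pow p (1-p) (n-k)
      rw [show p + (1-p) = 1 by ring, one_pow] at hap
      exact (Finset.sum_congr rfl (fun j _ => by ring)).trans hap.symm
    rw [hbin, mul_one]

lemma var_eq (p : ℝ) (n : ℕ) :
    ∑ i ∈ Finset.range (n+1), ((i:ℝ) - p*n)^2 * binomPMF p n i = p * n * (1-p) := by
  have e : ∀ i ∈ Finset.range (n+1), ((i:ℝ) - p*n)^2 * binomPMF p n i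
      = (p*n)^2 * ((i.descFactorial 0 : ℝ) * binomPMF p n i)
        + (1 - 2*(p*n)) * ((i.descFactorial 1 : ℝ) * binomPMF p n i)
        + 1 * ((i.descFactorial 2 : ℝ) * binomPMF p n i) := by
    intro i _
    simp only [cast_desc_prod, Finset.prod_range_succ, Finset.prod_range_zero]
    ring
  rw [Finset.sum_congr rfl e]
  simp only [Finset.sum_add_distrib, ← Finset.mul_sum]
  rw [desc_moment, desc_moment, desc_moment]
  simp only [cast_desc_prod, Finset.prod_range_succ, Finset.prod_range_zero]
  ring

set_option maxHeartbeats 1600000 in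

lemma mu8_eq (p : ℝ) (n : ℕ) :
    ∑ i ∈ Finset.range (n+1), ((i:ℝ) - p*n)^8 * binomPMF p n i
      = (p*n) * (1 - 127*p + 1932*p^2 - 10206*p^3 + 25200*p^4 - 31920*p^5 + 20160*p^6 - 5040*p^7)
        + (p*n)^2 * (119 - 2394*p + 13895*p^2 - 35700*p^3 + 46004*p^4 - 29232*p^5 + 7308*p^6)
        + (p*n)^3 * (490 - 3850*p + 10990*p^2 - 14770*p^3 + 9520*p^4 - 2380*p^5)
        + 105 * (p*n)^4 * (1-p)^4 := by
  have e : ∀ i ∈ Finset.range (n+1), ((i:ℝ) - p*n)^8 * binomPMF p n i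
      = ((p*n)^8) * ((i.descFactorial 0 : ℝ) * binomPMF p n i)
        + (1 - 8*(p*n) + 28*(p*n)^2 - 56*(p*n)^3 + 70*(p*n)^4 - 56*(p*n)^5 + 28*(p*n)^6 - 8*(p*n)^7)
            * ((i.descFactorial 1 : ℝ) * binomPMF p n i)
        + (127 - 504*(p*n) + 868*(p*n)^2 - 840*(p*n)^3 + 490*(p*n)^4 - 168*(p*n)^5 + 28*(p*n)^6)
            * ((i.descFactorial 2 : ℝ) * binomPMF p n i)
        + (966 - 2408*(p*n) + 2520*(p*n)^2 - 1400*(p*n)^3 + 420*(p*n)^4 - 56*(p*n)^5)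
            * ((i.descFactorial 3 : ℝ) * binomPMF p n i)
        + (1701 - 2800*(p*n) + 1820*(p*n)^2 - 560*(p*n)^3 + 70*(p*n)^4)
            * ((i.descFactorial 4 : ℝ) * binomPMF p n i)
        + (1050 - 1120*(p*n) + 420*(p*n)^2 - 56*(p*n)^3)
            * ((i.descFactorial 5 : ℝ) * binomPMF p n i)
        + (266 - 168*(p*n) + 28*(p*n)^2)
            * ((i.descFactorial 6 : ℝ) * binomPMF p n i)
        + (28 - 8*(p*n))
            * ((i.descFactorial 7 : ℝ) * binomPMF p n i)
        + 1 * ((i.descFactorial 8 : ℝ) * binomPMF p n i) := by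
    intro i _
    simp only [cast_desc_prod, Finset.prod_range_succ, Finset.prod_range_zero]
    ring
  rw [Finset.sum_congr rfl e]
  simp only [Finset.sum_add_distrib, ← Finset.mul_sum]
  rw [desc_moment, desc_moment, desc_moment, desc_moment, desc_moment, desc_moment,
    desc_moment, desc_moment, desc_moment]
  simp only [cast_desc_prod, Finset.prod_range_succ, Finset.prod_range_zero]
  ring

set_option maxHeartbeats 1000000 in
/-- For `X ~ B(n,p)` with `0 ≤ p ≤ 1/4` and `p·n ≥ 36`, the tail contribution to the
variance satisfies `E[(X - pn)²·1{|X - pn| ≥ 6√(pn)}] ≤ 0.01·p·n`, and consequently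
`E[(X - pn)²·1{|X - pn| < 6√(pn)}] ≥ 0.74·p·n`. -/
theorem binomial_variance_tail (p : ℝ) (n : ℕ) (hp0 : 0 ≤ p) (hp : p ≤ 1 / 4)
    (hpn : 36 ≤ p * n) :
    (∑ i ∈ Finset.range (n + 1),
        if 6 * Real.sqrt (p * n) ≤ |(i : ℝ) - p * n| then
          ((i : ℝ) - p * n) ^ 2 * binomPMF p n i else 0) ≤ 0.01 * (p * n)
    ∧ 0.74 * (p * n) ≤ ∑ i ∈ Finset.range (n + 1),
        if |(i : ℝ) - p * n| < 6 * Real.sqrt (p * n) then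
          ((i : ℝ) - p * n) ^ 2 * binomPMF p n i else 0 := by
  have hmpos : (0:ℝ) < p * n := by linarith
  have hsq : Real.sqrt (p*n) ^ 2 = p * n := Real.sq_sqrt hmpos.le
  have hpmf : ∀ i : ℕ, 0 ≤ binomPMF p n i := by
    intro i
    have h1 : (0:ℝ) ≤ 1 - p := by linarith
    unfold binomPMF
    positivity
  have hc3 : (0:ℝ) < 46656 * (p*n)^3 := by positivity
  -- pointwise Markov step
  have step : ∀ i ∈ Finset.range (n+1),
      (if 6 * Real.sqrt (p * n) ≤ |(i : ℝ) - p * n| then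
          ((i : ℝ) - p * n) ^ 2 * binomPMF p n i else 0)
        ≤ ((i:ℝ) - p*n)^8 * binomPMF p n i / (46656 * (p*n)^3) := by
    intro i _
    by_cases hcnd : 6 * Real.sqrt (p * n) ≤ |(i : ℝ) - p * n|
    · rw [if_pos hcnd]
      rw [le_div_iff₀ hc3]
      have h6 : (6 * Real.sqrt (p*n))^6 ≤ |(i:ℝ) - p*n|^6 :=
        pow_le_pow_left₀ (by positivity) hcnd 6
      have ht6 : (6 * Real.sqrt (p*n))^6 = 46656 * (p*n)^3 := by
        rw [mul_pow, show (Real.sqrt (p*n))^6 = ((Real.sqrt (p*n))^2)^3 by ring, hsq]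
        norm_num
      have habs : |(i:ℝ) - p*n|^6 = ((i:ℝ) - p*n)^6 := by
        rw [← abs_pow, abs_of_nonneg (by positivity)]
      rw [ht6, habs] at h6
      calc ((i:ℝ) - p*n)^2 * binomPMF p n i * (46656 * (p*n)^3)
          = (((i:ℝ) - p*n)^2 * (46656 * (p*n)^3)) * binomPMF p n i := by ring
        _ ≤ (((i:ℝ) - p*n)^2 * ((i:ℝ) - p*n)^6) * binomPMF p n i := by
            apply mul_le_mul_of_nonneg_right _ (hpmf i)
            exact mul_le_mul_of_nonneg_left h6 (sq_nonneg _)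
        _ = ((i:ℝ) - p*n)^8 * binomPMF p n i := by ring
    · rw [if_neg hcnd]
      exact div_nonneg (mul_nonneg (by positivity) (hpmf i)) hc3.le
  -- tail bound
  have tail_le : (∑ i ∈ Finset.range (n + 1),
      if 6 * Real.sqrt (p * n) ≤ |(i : ℝ) - p * n| then
        ((i : ℝ) - p * n) ^ 2 * binomPMF p n i else 0) ≤ 0.01 * (p * n) := by
    have h1 := Finset.sum_le_sum step
    rw [← Finset.sum_div, mu8_eq] at h1
    refine h1.trans ?_
    clear h1 step
    rw [div_le_iff₀ hc3]
    -- polynomial bound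
    have hp2 : p^2 ≤ 1/16 := by nlinarith
    have hp3 : p^3 ≤ 1/64 := by nlinarith
    have hp4 : p^4 ≤ 1/256 := by nlinarith
    have hp5 : p^5 ≤ 1/1024 := by nlinarith
    have hp6 : p^6 ≤ 1/4096 := by nlinarith
    have hq2 : 0 ≤ p^2 := by positivity
    have hq3 : 0 ≤ p^3 := by positivity
    have hq4 : 0 ≤ p^4 := by positivity
    have hq5 : 0 ≤ p^5 := by positivity
    have hq6 : 0 ≤ p^6 := by positivity
    have hq7 : 0 ≤ p^7 := by positivity
    have hA : 1 - 127*p + 1932*p^2 - 10206*p^3 + 25200*p^4 - 31920*p^5 + 20160*p^6 - 5040*p^7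
        ≤ 450 := by linarith
    have hB : 119 - 2394*p + 13895*p^2 - 35700*p^3 + 46004*p^4 - 29232*p^5 + 7308*p^6
        ≤ 2400 := by linarith
    have hC : 490 - 3850*p + 10990*p^2 - 14770*p^3 + 9520*p^4 - 2380*p^5 ≤ 2450 := by linarith
    have hD : (1-p)^4 ≤ 1 := by nlinarith [sq_nonneg (1-p), sq_nonneg ((1-p)^2)]
    set m := p * (n:ℝ) with hm
    have hm0 : (0:ℝ) ≤ m := hmpos.le
    have t1 : m * (1 - 127*p + 1932*p^2 - 10206*p^3 + 25200*p^4 - 31920*p^5 + 20160*p^6 - 5040*p^7)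
        ≤ m * 450 := mul_le_mul_of_nonneg_left hA hm0
    have t2 : m^2 * (119 - 2394*p + 13895*p^2 - 35700*p^3 + 46004*p^4 - 29232*p^5 + 7308*p^6)
        ≤ m^2 * 2400 := mul_le_mul_of_nonneg_left hB (by positivity)
    have t3 : m^3 * (490 - 3850*p + 10990*p^2 - 14770*p^3 + 9520*p^4 - 2380*p^5)
        ≤ m^3 * 2450 := mul_le_mul_of_nonneg_left hC (by positivity)
    have t4 : 105 * m^4 * (1-p)^4 ≤ 105 * m^4 := by
      have := mul_le_mul_of_nonneg_left hD (show (0:ℝ) ≤ 105 * m^4 by positivity)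
      linarith [this]
    have h36 : (36:ℝ) ≤ m := hpn
    have e2 : 36 * m ≤ m^2 := by
      calc 36 * m ≤ m * m := mul_le_mul_of_nonneg_right h36 hm0
        _ = m^2 := by ring
    have e3 : 36 * m^2 ≤ m^3 := by
      calc 36 * m^2 ≤ m * m^2 := mul_le_mul_of_nonneg_right h36 (by positivity)
        _ = m^3 := by ring
    have e4 : 36 * m^3 ≤ m^4 := by
      calc 36 * m^3 ≤ m * m^3 := mul_le_mul_of_nonneg_right h36 (by positivity)
        _ = m^4 := by ring
    have hrng : 0.01 * m * (46656 * m^3) = 466.56 * m^4 := by ring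
    linarith [t1, t2, t3, t4, e2, e3, e4, hrng]
  constructor
  · exact tail_le
  · -- head bound
    have split : ∀ i ∈ Finset.range (n+1),
        (if 6 * Real.sqrt (p * n) ≤ |(i : ℝ) - p * n| then
            ((i : ℝ) - p * n) ^ 2 * binomPMF p n i else 0)
        + (if |(i : ℝ) - p * n| < 6 * Real.sqrt (p * n) then
            ((i : ℝ) - p * n) ^ 2 * binomPMF p n i else 0)
        = ((i:ℝ) - p*n)^2 * binomPMF p n i := by
      intro i _
      by_cases hcnd : 6 * Real.sqrt (p * n) ≤ |(i : ℝ) - p * n|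
      · rw [if_pos hcnd, if_neg (not_lt.2 hcnd), add_zero]
      · rw [if_neg hcnd, if_pos (not_le.1 hcnd), zero_add]
    have hsum : (∑ i ∈ Finset.range (n + 1),
          if 6 * Real.sqrt (p * n) ≤ |(i : ℝ) - p * n| then
            ((i : ℝ) - p * n) ^ 2 * binomPMF p n i else 0)
        + (∑ i ∈ Finset.range (n + 1),
          if |(i : ℝ) - p * n| < 6 * Real.sqrt (p * n) then
            ((i : ℝ) - p * n) ^ 2 * binomPMF p n i else 0)
        = p * n * (1-p) := by
      rw [← Finset.sum_add_distrib, Finset.sum_congr rfl split, var_eq]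
    have hvar : 0.75 * (p * n) ≤ p * n * (1 - p) := by nlinarith
    linarith
end

section
/- Rayleigh's Monotonicity Principle: if H is a subgraph of a weighted graph G (obtained by deleting edges or decreasing edge weights), then for any two vertices s, t connected in H, the effective resistance satisfies R_G(s,t) ≤ R_H(s,t). -/
open Finset

lemma rayleigh_bilin_eq {V : Type*} [Fintype V] (w : V → V → ℝ)
    (hsym : ∀ x y, w x y = w y x) (u v : V → ℝ) :
    ∑ x, ∑ y, w x y * (u x - u y) * (v x - v y)
      = 2 * ∑ x, (∑ y, w x y * (u x - u y)) * v x := by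
  have h1 : ∑ x, ∑ y, w x y * (u x - u y) * v y
      = ∑ x, ∑ y, w x y * (u y - u x) * v x := by
    rw [Finset.sum_comm]
    exact Finset.sum_congr rfl fun y _ => Finset.sum_congr rfl fun x _ => by rw [hsym]
  have h2 : ∀ x, (∑ y, w x y * (u x - u y)) * v x = ∑ y, w x y * (u x - u y) * v x := by
    intro x; rw [Finset.sum_mul]
  simp only [h2]
  have expand : ∑ x, ∑ y, w x y * (u x - u y) * (v x - v y)
      = ∑ x, ∑ y, w x y * (u x - u y) * v x - ∑ x, ∑ y, w x y * (u x - u y) * v y := by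
    rw [← Finset.sum_sub_distrib]
    refine Finset.sum_congr rfl fun x _ => ?_
    rw [← Finset.sum_sub_distrib]
    exact Finset.sum_congr rfl fun y _ => by ring
  rw [expand, h1]
  have h3 : ∑ x, ∑ y, w x y * (u y - u x) * v x
      = - ∑ x, ∑ y, w x y * (u x - u y) * v x := by
    rw [← Finset.sum_neg_distrib]
    refine Finset.sum_congr rfl fun x _ => ?_
    rw [← Finset.sum_neg_distrib]
    exact Finset.sum_congr rfl fun y _ => by ring
  rw [h3]; ring

lemma rayleigh_lap_pair {V : Type*} [Fintype V] [DecidableEq V] (w : V → V → ℝ)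
    (hsym : ∀ x y, w x y = w y x) (s t : V) (hst : s ≠ t) (u v : V → ℝ)
    (hu : ∀ x, ∑ y, w x y * (u x - u y)
        = (if x = s then (1 : ℝ) else 0) - (if x = t then (1 : ℝ) else 0)) :
    ∑ x, ∑ y, w x y * (u x - u y) * (v x - v y) = 2 * (v s - v t) := by
  rw [rayleigh_bilin_eq w hsym u v]
  congr 1
  simp only [hu, sub_mul, ite_mul, one_mul, zero_mul]
  rw [Finset.sum_sub_distrib]
  simp [Finset.sum_ite_eq', hst]

lemma rayleigh_cauchy_schwarz {V : Type*} [Fintype V] (wH : V → V → ℝ)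
    (hHnn : ∀ x y, 0 ≤ wH x y) (uG uH : V → ℝ) :
    (∑ x, ∑ y, wH x y * (uH x - uH y) * (uG x - uG y)) ^ 2
      ≤ (∑ x, ∑ y, wH x y * (uH x - uH y) * (uH x - uH y))
        * (∑ x, ∑ y, wH x y * (uG x - uG y) * (uG x - uG y)) := by
  have hsq : ∀ (u : V → ℝ) (p : V × V),
      (Real.sqrt (wH p.1 p.2) * (u p.1 - u p.2)) ^ 2
        = wH p.1 p.2 * (u p.1 - u p.2) * (u p.1 - u p.2) := by
    intro u p
    rw [mul_pow, Real.sq_sqrt (hHnn p.1 p.2)]; ring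
  have key := Finset.sum_mul_sq_le_sq_mul_sq Finset.univ
    (fun p : V × V => Real.sqrt (wH p.1 p.2) * (uH p.1 - uH p.2))
    (fun p : V × V => Real.sqrt (wH p.1 p.2) * (uG p.1 - uG p.2))
  simp only [hsq] at key
  have hm : ∀ p : V × V,
      (Real.sqrt (wH p.1 p.2) * (uH p.1 - uH p.2))
          * (Real.sqrt (wH p.1 p.2) * (uG p.1 - uG p.2))
        = wH p.1 p.2 * (uH p.1 - uH p.2) * (uG p.1 - uG p.2) := by
    intro p
    rw [show (Real.sqrt (wH p.1 p.2) * (uH p.1 - uH p.2))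
          * (Real.sqrt (wH p.1 p.2) * (uG p.1 - uG p.2))
        = (Real.sqrt (wH p.1 p.2) * Real.sqrt (wH p.1 p.2))
          * ((uH p.1 - uH p.2) * (uG p.1 - uG p.2)) by ring,
      Real.mul_self_sqrt (hHnn p.1 p.2)]
    ring
  simp only [hm] at key
  simpa only [Fintype.sum_prod_type] using key

/-- Rayleigh's Monotonicity Principle: if `H` is obtained from a weighted graph `G` by
deleting edges or decreasing edge weights (`w_H ≤ w_G` pointwise), then for vertices `s, t`
connected in `H`, the effective resistances satisfy `R_G(s,t) ≤ R_H(s,t)`.  Effective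
resistances are encoded via potentials solving the Laplacian equation `L u = e_s - e_t`,
for which `R(s,t) = u(s) - u(t)`. -/
theorem rayleigh_monotonicity {V : Type*} [Fintype V] [DecidableEq V]
    (wG wH : V → V → ℝ)
    (hGsym : ∀ x y, wG x y = wG y x) (hHsym : ∀ x y, wH x y = wH y x)
    (hHnn : ∀ x y, 0 ≤ wH x y) (hle : ∀ x y, wH x y ≤ wG x y)
    (s t : V) (hst : s ≠ t)
    (hconn : (SimpleGraph.fromRel (fun x y => 0 < wH x y)).Reachable s t)
    (uG uH : V → ℝ)
    (huG : ∀ x, ∑ y, wG x y * (uG x - uG y)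
        = (if x = s then (1 : ℝ) else 0) - (if x = t then (1 : ℝ) else 0))
    (huH : ∀ x, ∑ y, wH x y * (uH x - uH y)
        = (if x = s then (1 : ℝ) else 0) - (if x = t then (1 : ℝ) else 0)) :
    uG s - uG t ≤ uH s - uH t := by
  set RG := uG s - uG t with hRG
  set RH := uH s - uH t with hRH
  have eGG : ∑ x, ∑ y, wG x y * (uG x - uG y) * (uG x - uG y) = 2 * RG :=
    rayleigh_lap_pair wG hGsym s t hst uG uG huG
  have eHH : ∑ x, ∑ y, wH x y * (uH x - uH y) * (uH x - uH y) = 2 * RH :=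
    rayleigh_lap_pair wH hHsym s t hst uH uH huH
  have eHG : ∑ x, ∑ y, wH x y * (uH x - uH y) * (uG x - uG y) = 2 * RG :=
    rayleigh_lap_pair wH hHsym s t hst uH uG huH
  -- E_H(uG,uG) ≤ E_G(uG,uG) = 2·RG
  have emono : ∑ x, ∑ y, wH x y * (uG x - uG y) * (uG x - uG y) ≤ 2 * RG := by
    rw [← eGG]
    refine Finset.sum_le_sum fun x _ => Finset.sum_le_sum fun y _ => ?_
    nlinarith [hle x y, mul_self_nonneg (uG x - uG y)]
  -- 0 ≤ E_H(uG,uG)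
  have eGGnn : 0 ≤ ∑ x, ∑ y, wH x y * (uG x - uG y) * (uG x - uG y) := by
    refine Finset.sum_nonneg fun x _ => Finset.sum_nonneg fun y _ => ?_
    nlinarith [hHnn x y, mul_self_nonneg (uG x - uG y)]
  -- 0 ≤ 2·RH
  have hRHnn : 0 ≤ 2 * RH := by
    rw [← eHH]
    refine Finset.sum_nonneg fun x _ => Finset.sum_nonneg fun y _ => ?_
    nlinarith [hHnn x y, mul_self_nonneg (uH x - uH y)]
  have cs := rayleigh_cauchy_schwarz wH hHnn uG uH
  rw [eHG, eHH] at cs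
  -- (2RG)^2 ≤ (2RH)·E_H(uG,uG) ≤ (2RH)·(2RG)
  have key : (2 * RG) ^ 2 ≤ (2 * RH) * (2 * RG) :=
    cs.trans (mul_le_mul_of_nonneg_left emono hRHnn)
  rcases le_or_gt RG 0 with h | h
  · linarith
  · nlinarith
end

section
/- Let G be a graph, let OPT_G = min_{U ⊆ V, 0<|U|<n/2} Cut_G(U)/|U| be the sparsest-cut value of G, and let G̃ satisfy: (a) (1−ε)·Cut_G(U) ≤ Cut_{G̃}(U) for all U, and (b) Cut_{G̃}(U_G) ≤ (1+ε)·Cut_G(U_G) + δ·|U_G| for an optimal set U_G of G, with ε = 1/2. Suppose Ū achieves Cut_{G̃}(Ū)/|Ū| ≤ α·OPT_{G̃} with |Ū| < n/2, and let OPT′ = Cut_{G̃}(Ū)/|Ū|. If δ ≤ OPT′/(2α), then Cut_G(Ū)/|Ū| ≤ 6α·OPT_G. -/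
open Finset

/-- Reduction of the sparsest cut problem to a probabilistic sparsifier (with `ε = 1/2`).
If `G̃` satisfies the one-sided cut bounds (a) and (b), `Ū` is an `α`-approximate sparsest
cut of `G̃` with value `OPT' = Cut_{G̃}(Ū)/|Ū|`, and `δ ≤ OPT'/(2α)`, then `Ū` is a
`6α`-approximate sparsest cut of `G`. -/
theorem sparsest_cut_reduction {V : Type*} [Fintype V]
    (cutG cutGt : Finset V → ℝ) (OPTG OPTGt OPT' α δ : ℝ) (UG Ub : Finset V)
    (hα : 0 < α)
    (hUG1 : 0 < UG.card) (hUG2 : (UG.card : ℝ) < (Fintype.card V : ℝ) / 2)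
    (hOPTGdef : OPTG = cutG UG / (UG.card : ℝ))
    (hOPTGmin : ∀ U : Finset V, 0 < U.card → (U.card : ℝ) < (Fintype.card V : ℝ) / 2 →
      OPTG ≤ cutG U / (U.card : ℝ))
    (ha : ∀ U : Finset V, (1 / 2) * cutG U ≤ cutGt U)
    (hb : cutGt UG ≤ (3 / 2) * cutG UG + δ * (UG.card : ℝ))
    (hUb1 : 0 < Ub.card) (hUb2 : (Ub.card : ℝ) < (Fintype.card V : ℝ) / 2)
    (hOPT' : OPT' = cutGt Ub / (Ub.card : ℝ))
    (happrox : OPT' ≤ α * OPTGt)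
    (hOPTGtmin : ∀ U : Finset V, 0 < U.card → (U.card : ℝ) < (Fintype.card V : ℝ) / 2 →
      OPTGt ≤ cutGt U / (U.card : ℝ))
    (hδ : δ ≤ OPT' / (2 * α)) :
    cutG Ub / (Ub.card : ℝ) ≤ 6 * α * OPTG := by
  have hUGpos : (0:ℝ) < (UG.card : ℝ) := by exact_mod_cast hUG1
  have hUbpos : (0:ℝ) < (Ub.card : ℝ) := by exact_mod_cast hUb1
  -- OPTGt ≤ 3/2 OPTG + δ
  have h1 : OPTGt ≤ (3/2) * OPTG + δ := by
    have h := hOPTGtmin UG hUG1 hUG2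
    have h2 : cutGt UG / (UG.card : ℝ) ≤ (3/2) * OPTG + δ := by
      rw [hOPTGdef, div_le_iff₀ hUGpos]
      have hc : cutG UG / (UG.card : ℝ) * (UG.card : ℝ) = cutG UG :=
        div_mul_cancel₀ _ hUGpos.ne'
      have hd : cutGt UG / (UG.card : ℝ) * (UG.card : ℝ) = cutGt UG :=
        div_mul_cancel₀ _ hUGpos.ne'
      nlinarith
    linarith
  -- OPT' ≤ 3 α OPTG
  have hδ' : α * δ ≤ OPT' / 2 := by
    have h := (le_div_iff₀ (by positivity : (0:ℝ) < 2 * α)).mp hδ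
    nlinarith
  have h3 : OPT' ≤ 3 * α * OPTG := by nlinarith
  -- cutG Ub ≤ 2 cutGt Ub
  have h4 : cutG Ub ≤ 2 * cutGt Ub := by have := ha Ub; linarith
  have h5 : cutG Ub / (Ub.card : ℝ) ≤ 2 * OPT' := by
    rw [hOPT', div_le_iff₀ hUbpos]
    have hd : cutGt Ub / (Ub.card : ℝ) * (Ub.card : ℝ) = cutGt Ub :=
      div_mul_cancel₀ _ hUbpos.ne'
    nlinarith
  linarith
end
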